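/- arXiv:2601.20735 — 2 statements merged into one kernel-verified Lean document; each statement's English description precedes it below -/
import Mathlib

section
/- Let P be a plain metric logic program over alphabet 𝒜, let λ ≥ 1, and let M = ((⟨T_i,T_i⟩)_{0≤i<λ}, τ) be a total timed HT-trace of length λ. If M is a metric equilibrium model of P, then θ^c(M) is a constraint equilibrium model of Π_λ(P) ∪ Δ^c_λ ∪ Ψ^c_λ(P). -/
namespace MetricASP

/-- Metric intervals `[m..n)` with `n = none` standing for `ω`. -/
structure Interval : Type where
  m : ℕ
  n : Option ℕ

/-- `x ∈ [m..n)` iff `m ≤ x` and (`n = ω` or `x < n`). -/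
def Interval.mem (I : Interval) (x : ℕ) : Prop :=
  I.m ≤ x ∧ ∀ nn ∈ I.n, x < nn

/-- The interval `[0..ω)`. -/
def fullInterval : Interval := ⟨0, none⟩

/-- Metric formulas over an alphabet `α`. -/
inductive MF (α : Type) : Type
  | fls
  | atom (a : α)
  | conj (φ ψ : MF α)
  | disj (φ ψ : MF α)
  | impl (φ ψ : MF α)
  | init
  | next (I : Interval) (φ : MF α)
  | always (I : Interval) (φ : MF α)
  | evt (I : Interval) (φ : MF α)

def MF.neg {α : Type} (φ : MF α) : MF α := .impl φ .fls
def MF.top {α : Type} : MF α := MF.neg .fls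
def MF.fin {α : Type} : MF α := MF.neg (.next fullInterval MF.top)

/-- Timing function wrt `lam`. -/
def IsTiming (lam : ℕ) (τ : ℕ → ℕ) : Prop :=
  τ 0 = 0 ∧ ∀ k, k + 1 < lam → τ k < τ (k + 1)

/-- `H i ⊆ T i` for all relevant indices. -/
def IsTrace {α : Type} (lam : ℕ) (H T : ℕ → Set α) : Prop :=
  ∀ i, i < lam → H i ⊆ T i

/-- Satisfaction of a metric formula by a timed HT-trace of length `lam`. -/
def MSat {α : Type} (lam : ℕ) (τ : ℕ → ℕ) :
    (ℕ → Set α) → (ℕ → Set α) → ℕ → MF α → Prop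
  | _, _, _, .fls => False
  | H, _, k, .atom a => a ∈ H k
  | H, T, k, .conj φ ψ => MSat lam τ H T k φ ∧ MSat lam τ H T k ψ
  | H, T, k, .disj φ ψ => MSat lam τ H T k φ ∨ MSat lam τ H T k ψ
  | H, T, k, .impl φ ψ =>
      (MSat lam τ H T k φ → MSat lam τ H T k ψ) ∧
      (MSat lam τ T T k φ → MSat lam τ T T k ψ)
  | _, _, k, .init => k = 0
  | H, T, k, .next I φ =>
      k + 1 < lam ∧ MSat lam τ H T (k + 1) φ ∧ I.mem (τ (k + 1) - τ k)
  | H, T, k, .evt I φ =>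
      ∃ i, k ≤ i ∧ i < lam ∧ I.mem (τ i - τ k) ∧ MSat lam τ H T i φ
  | H, T, k, .always I φ =>
      ∀ i, k ≤ i → i < lam → I.mem (τ i - τ k) → MSat lam τ H T i φ

/-- MHT-model of a set of metric formulas. -/
def MHTModels {α : Type} (lam : ℕ) (τ : ℕ → ℕ) (H T : ℕ → Set α)
    (Γ : Set (MF α)) : Prop :=
  ∀ φ ∈ Γ, MSat lam τ H T 0 φ

/-- Metric equilibrium model (of the total trace given by `T` and `τ`). -/
def MetricEqModel {α : Type} (lam : ℕ) (τ : ℕ → ℕ) (T : ℕ → Set α)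
    (Γ : Set (MF α)) : Prop :=
  MHTModels lam τ T T Γ ∧
  ∀ H : ℕ → Set α, IsTrace lam H T → (∃ i, i < lam ∧ H i ≠ T i) →
    ¬ MHTModels lam τ H T Γ

/-- Propositional formulas over atoms `β`. -/
inductive PF (β : Type) : Type
  | fls
  | atom (a : β)
  | and (φ ψ : PF β)
  | or (φ ψ : PF β)
  | imp (φ ψ : PF β)

def PF.neg {β : Type} (φ : PF β) : PF β := .imp φ .fls
def PF.top {β : Type} : PF β := PF.neg .fls

def bigOr {β : Type} (l : List (PF β)) : PF β := l.foldr .or .fls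
def bigAnd {β : Type} (l : List (PF β)) : PF β := l.foldr .and PF.top

/-- Here-and-there satisfaction. -/
def HSat {β : Type} : Set β → Set β → PF β → Prop
  | _, _, .fls => False
  | H, _, .atom a => a ∈ H
  | H, T, .and φ ψ => HSat H T φ ∧ HSat H T ψ
  | H, T, .or φ ψ => HSat H T φ ∨ HSat H T ψ
  | H, T, .imp φ ψ => (HSat H T φ → HSat H T ψ) ∧ (HSat T T φ → HSat T T ψ)

def HTModels {β : Type} (H T : Set β) (Γ : Set (PF β)) : Prop :=
  ∀ φ ∈ Γ, HSat H T φ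

/-- `T` (as the total interpretation `⟨T,T⟩`) is an equilibrium model of `Γ`. -/
def EqModel {β : Type} (T : Set β) (Γ : Set (PF β)) : Prop :=
  HTModels T T Γ ∧ ∀ H : Set β, H ⊂ T → ¬ HTModels H T Γ

/-- Literals over atoms `β`. -/
inductive Lit (β : Type) : Type
  | pos (a : β)
  | neg (a : β)

/-- Body atoms: atoms of the alphabet, `𝗜`, or `𝗙`. -/
inductive BAt (α : Type) : Type
  | atm (a : α)
  | init
  | fin

/-- A plain metric rule: `□(α ← β)` or `□(◯_I a ← β)`. -/
inductive PlainRule (α : Type) : Type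
  | basic (head : List (Lit α)) (body : List (Lit (BAt α)))
  | nxt (I : Interval) (a : α) (body : List (Lit (BAt α)))

def litMF {α β : Type} (f : β → MF α) : Lit β → MF α
  | .pos a => f a
  | .neg a => MF.neg (f a)

def BAt.mf {α : Type} : BAt α → MF α
  | .atm a => .atom a
  | .init => .init
  | .fin => MF.fin

def headMF {α : Type} (l : List (Lit α)) : MF α :=
  (l.map (litMF MF.atom)).foldr .disj .fls

def bodyMF {α : Type} (l : List (Lit (BAt α))) : MF α :=
  (l.map (litMF BAt.mf)).foldr .conj MF.top

/-- The metric formula corresponding to a plain metric rule. -/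
def PlainRule.mf {α : Type} : PlainRule α → MF α
  | .basic h b => .always fullInterval (.impl (bodyMF b) (headMF h))
  | .nxt I a b => .always fullInterval (.impl (bodyMF b) (.next I (.atom a)))

/-- Domain values: the Boolean truth value `𝐭` and the natural numbers. -/
inductive DVal : Type
  | tt
  | num (n : ℕ)

/-- Valuations: partial functions from variables to domain values. -/
def Valu (χ : Type) : Type := χ → Option DVal

/-- Graph inclusion of valuations. -/
def Valu.le {χ : Type} (v w : Valu χ) : Prop :=
  ∀ x d, v x = some d → w x = some d

/-- HTc satisfaction of constraint formulas, for a given denotation of atoms. -/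
def CSat {χ κ : Type} (den : κ → Valu χ → Prop) :
    Valu χ → Valu χ → PF κ → Prop
  | _, _, .fls => False
  | h, _, .atom c => den c h
  | h, t, .and φ ψ => CSat den h t φ ∧ CSat den h t ψ
  | h, t, .or φ ψ => CSat den h t φ ∨ CSat den h t ψ
  | h, t, .imp φ ψ =>
      (CSat den h t φ → CSat den h t ψ) ∧ (CSat den t t φ → CSat den t t ψ)

def CModels {χ κ : Type} (den : κ → Valu χ → Prop) (h t : Valu χ)
    (Γ : Set (PF κ)) : Prop :=
  ∀ φ ∈ Γ, CSat den h t φ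

/-- `t` (as the total HTc-interpretation `⟨t,t⟩`) is a constraint equilibrium model. -/
def CEqModel {χ κ : Type} (den : κ → Valu χ → Prop) (t : Valu χ)
    (Γ : Set (PF κ)) : Prop :=
  CModels den t t Γ ∧
  ∀ h : Valu χ, Valu.le h t → h ≠ t → ¬ CModels den h t Γ

/-- Variables of the HTc signature for the plain translation: `a_k` and `t_k`. -/
inductive CV (α : Type) : Type
  | av (a : α) (k : ℕ)
  | tv (k : ℕ)

/-- Constraint atoms: `a_k = 𝐭`, `t_k = d`, and `t_k − t_j ≤ d`. -/
inductive CAt (α : Type) : Type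
  | bool (a : α) (k : ℕ)
  | eqN (k d : ℕ)
  | diff (k j : ℕ) (d : ℤ)

/-- Denotation of constraint atoms. -/
def CAt.den {α : Type} : CAt α → Valu (CV α) → Prop
  | .bool a k, v => v (.av a k) = some .tt
  | .eqN k d, v => v (.tv k) = some (.num d)
  | .diff k j d, v => ∃ x y : ℕ,
      v (.tv k) = some (.num x) ∧ v (.tv j) = some (.num y) ∧ (x : ℤ) - (y : ℤ) ≤ d

def csigLit {β α : Type} (f : β → PF (CAt α)) : Lit β → PF (CAt α)
  | .pos a => f a
  | .neg a => PF.neg (f a)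

def csigBAt {α : Type} (lam k : ℕ) : BAt α → PF (CAt α)
  | .atm a => .atom (.bool a k)
  | .init => if k = 0 then PF.top else .fls
  | .fin => if k = lam - 1 then PF.top else .fls

def csigBody {α : Type} (lam k : ℕ) (b : List (Lit (BAt α))) : PF (CAt α) :=
  (b.map (csigLit (csigBAt lam k))).foldr .and PF.top

def csigHead {α : Type} (k : ℕ) (h : List (Lit α)) : PF (CAt α) :=
  (h.map (csigLit (fun a => PF.atom (CAt.bool a k)))).foldr .or .fls

/-- The translation `σ_k` of a plain metric rule, in the constraint language. -/
def csigRule {α : Type} (lam k : ℕ) : PlainRule α → PF (CAt α)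
  | .basic h b => .imp (csigBody lam k b) (csigHead k h)
  | .nxt _ a b => .imp (csigBody lam k b)
      (if k = lam - 1 then .fls else .atom (.bool a (k + 1)))

/-- `Π_λ(P)` in the constraint language. -/
def cPiTheory {α : Type} (lam : ℕ) (P : Set (PlainRule α)) : Set (PF (CAt α)) :=
  {φ | ∃ r ∈ P, ∃ k, k < lam ∧ φ = csigRule lam k r}

/-- `Δ^c_λ`. -/
def deltaC (α : Type) (lam : ℕ) : Set (PF (CAt α)) :=
  insert (PF.atom (CAt.eqN 0 0))
    {φ | ∃ k, k + 1 < lam ∧ φ = PF.atom (CAt.diff k (k + 1) (-1))}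

/-- `Ψ^c_λ(P)`. -/
def psiC {α : Type} (lam : ℕ) (P : Set (PlainRule α)) : Set (PF (CAt α)) :=
  {φ | ∃ I a b, PlainRule.nxt I a b ∈ P ∧ ∃ k, k + 1 < lam ∧
    φ = PF.imp (.and (csigBody lam k b)
          (PF.neg (.atom (.diff k (k + 1) (-(I.m : ℤ)))))) .fls} ∪
  {φ | ∃ I a b nn, PlainRule.nxt I a b ∈ P ∧ I.n = some nn ∧ ∃ k, k + 1 < lam ∧
    φ = PF.imp (.and (csigBody lam k b)
          (PF.neg (.atom (.diff (k + 1) k ((nn : ℤ) - 1))))) .fls}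

open Classical in
-- The valuation `θ^c(M)` (one component of it, built from a trace component `S`).
noncomputable def thetaC {α : Type} (lam : ℕ) (τ : ℕ → ℕ) (S : ℕ → Set α) :
    Valu (CV α) :=
  fun x => match x with
    | .av a k => if k < lam ∧ a ∈ S k then some .tt else none
    | .tv k => if k < lam then some (.num (τ k)) else none


section Aux
variable {α : Type}

lemma full_mem (x : ℕ) : fullInterval.mem x := by
  refine ⟨Nat.zero_le _, ?_⟩
  intro nn h
  simp [fullInterval, Option.mem_def] at h

lemma thetaC_av (lam : ℕ) (τ : ℕ → ℕ) (S : ℕ → Set α) (a : α) (k : ℕ) :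
    thetaC lam τ S (.av a k) = some .tt ↔ k < lam ∧ a ∈ S k := by
  simp only [thetaC]
  split_ifs with hc
  · simp [hc]
  · simp [hc]

lemma thetaC_tv (lam : ℕ) (τ : ℕ → ℕ) (S : ℕ → Set α) {k : ℕ} (hk : k < lam) :
    thetaC lam τ S (.tv k) = some (.num (τ k)) := by
  simp [thetaC, hk]

lemma theta_le (lam : ℕ) (τ : ℕ → ℕ) {H T : ℕ → Set α} (hHT : ∀ i, H i ⊆ T i) :
    Valu.le (thetaC lam τ H) (thetaC lam τ T) := by
  intro x d hx
  cases x with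
  | av a k =>
    simp only [thetaC] at hx ⊢
    split_ifs at hx with h1
    · cases hx
      rw [if_pos ⟨h1.1, hHT k h1.2⟩]
  | tv k => exact hx

lemma csat_persist {h t : Valu (CV α)} (hle : Valu.le h t) :
    ∀ φ : PF (CAt α), CSat CAt.den h t φ → CSat CAt.den t t φ := by
  intro φ
  induction φ with
  | fls => exact id
  | atom c =>
    intro hc
    cases c with
    | bool a k => exact hle _ _ hc
    | eqN k d => exact hle _ _ hc
    | diff k j d =>
      obtain ⟨x, y, hx, hy, hd⟩ := hc
      exact ⟨x, y, hle _ _ hx, hle _ _ hy, hd⟩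
  | and φ ψ ihφ ihψ => rintro ⟨a, b⟩; exact ⟨ihφ a, ihψ b⟩
  | or φ ψ ihφ ihψ => rintro (a | b); exacts [Or.inl (ihφ a), Or.inr (ihψ b)]
  | imp φ ψ _ _ => rintro ⟨_, b⟩; exact ⟨b, b⟩

lemma csat_atom (lam : ℕ) (τ : ℕ → ℕ) (H T : ℕ → Set α) {k : ℕ} (hk : k < lam) (a : α) :
    CSat CAt.den (thetaC lam τ H) (thetaC lam τ T) (.atom (.bool a k)) ↔ a ∈ H k := by
  show CAt.den (.bool a k) (thetaC lam τ H) ↔ _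
  simp only [CAt.den, thetaC_av]
  exact and_iff_right hk

lemma csat_bat (lam : ℕ) (τ : ℕ → ℕ) (H T : ℕ → Set α) {k : ℕ} (hk : k < lam) (ba : BAt α) :
    CSat CAt.den (thetaC lam τ H) (thetaC lam τ T) (csigBAt lam k ba) ↔
      MSat lam τ H T k ba.mf := by
  cases ba with
  | atm a =>
    simpa [csigBAt, BAt.mf, MSat] using csat_atom lam τ H T hk a
  | init =>
    by_cases h0 : k = 0 <;>
      simp [csigBAt, BAt.mf, h0, MSat, PF.top, PF.neg, CSat]
  | fin =>
    have hiff : (k = lam - 1) ↔ ¬ (k + 1 < lam) := by omega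
    by_cases h0 : k = lam - 1 <;>
      simp [csigBAt, BAt.mf, h0, MSat, PF.top, PF.neg, CSat, MF.fin, MF.neg, MF.top,
        full_mem, hiff.mp, (by omega : ¬ (k = lam - 1) → k + 1 < lam)] <;> omega

end Aux

section Aux2
variable {α : Type}

lemma csat_blit (lam : ℕ) (τ : ℕ → ℕ) (H T : ℕ → Set α) {k : ℕ} (hk : k < lam)
    (l : Lit (BAt α)) :
    CSat CAt.den (thetaC lam τ H) (thetaC lam τ T) (csigLit (csigBAt lam k) l) ↔
      MSat lam τ H T k (litMF BAt.mf l) := by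
  cases l with
  | pos a => exact csat_bat lam τ H T hk a
  | neg a =>
    show ((CSat CAt.den (thetaC lam τ H) (thetaC lam τ T) (csigBAt lam k a) → False) ∧
        (CSat CAt.den (thetaC lam τ T) (thetaC lam τ T) (csigBAt lam k a) → False)) ↔
      ((MSat lam τ H T k a.mf → False) ∧ (MSat lam τ T T k a.mf → False))
    rw [csat_bat lam τ H T hk a, csat_bat lam τ T T hk a]

lemma csat_body (lam : ℕ) (τ : ℕ → ℕ) (H T : ℕ → Set α) {k : ℕ} (hk : k < lam)
    (b : List (Lit (BAt α))) :
    CSat CAt.den (thetaC lam τ H) (thetaC lam τ T) (csigBody lam k b) ↔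
      MSat lam τ H T k (bodyMF b) := by
  induction b with
  | nil => simp [csigBody, bodyMF, CSat, MSat, PF.top, PF.neg, MF.top, MF.neg]
  | cons l rest ih =>
    show CSat CAt.den _ _ (.and (csigLit (csigBAt lam k) l) (csigBody lam k rest)) ↔
      MSat lam τ H T k (.conj (litMF BAt.mf l) (bodyMF rest))
    show (CSat CAt.den _ _ (csigLit (csigBAt lam k) l) ∧
        CSat CAt.den _ _ (csigBody lam k rest)) ↔
      (MSat lam τ H T k (litMF BAt.mf l) ∧ MSat lam τ H T k (bodyMF rest))
    rw [csat_blit lam τ H T hk l, ih]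

lemma csat_hlit (lam : ℕ) (τ : ℕ → ℕ) (H T : ℕ → Set α) {k : ℕ} (hk : k < lam)
    (l : Lit α) :
    CSat CAt.den (thetaC lam τ H) (thetaC lam τ T)
        (csigLit (fun a => PF.atom (CAt.bool a k)) l) ↔
      MSat lam τ H T k (litMF MF.atom l) := by
  cases l with
  | pos a => exact csat_atom lam τ H T hk a
  | neg a =>
    show ((CSat CAt.den (thetaC lam τ H) (thetaC lam τ T) (.atom (.bool a k)) → False) ∧
        (CSat CAt.den (thetaC lam τ T) (thetaC lam τ T) (.atom (.bool a k)) → False)) ↔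
      ((MSat lam τ H T k (.atom a) → False) ∧ (MSat lam τ T T k (.atom a) → False))
    rw [csat_atom lam τ H T hk a, csat_atom lam τ T T hk a]
    simp [MSat]

lemma csat_head (lam : ℕ) (τ : ℕ → ℕ) (H T : ℕ → Set α) {k : ℕ} (hk : k < lam)
    (hd : List (Lit α)) :
    CSat CAt.den (thetaC lam τ H) (thetaC lam τ T) (csigHead k hd) ↔
      MSat lam τ H T k (headMF hd) := by
  induction hd with
  | nil => simp [csigHead, headMF, CSat, MSat]
  | cons l rest ih =>
    show CSat CAt.den _ _
        (.or (csigLit (fun a => PF.atom (CAt.bool a k)) l) (csigHead k rest)) ↔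
      MSat lam τ H T k (.disj (litMF MF.atom l) (headMF rest))
    show (CSat CAt.den _ _ (csigLit (fun a => PF.atom (CAt.bool a k)) l) ∨
        CSat CAt.den _ _ (csigHead k rest)) ↔
      (MSat lam τ H T k (litMF MF.atom l) ∨ MSat lam τ H T k (headMF rest))
    rw [csat_hlit lam τ H T hk l, ih]

end Aux2

theorem stmt2 {α : Type} (lam : ℕ) (hlam : 1 ≤ lam)
    (τ : ℕ → ℕ) (hτ : IsTiming lam τ)
    (T : ℕ → Set α) (P : Set (PlainRule α))
    (hM : MetricEqModel lam τ T (PlainRule.mf '' P)) :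
    CEqModel CAt.den (thetaC lam τ T)
      (cPiTheory lam P ∪ deltaC α lam ∪ psiC lam P) := by
  classical
  obtain ⟨hTmod, hmin⟩ := hM
  -- rule instances at the total trace
  have hruleB : ∀ hd b, PlainRule.basic hd b ∈ P → ∀ k, k < lam →
      MSat lam τ T T k (bodyMF b) → MSat lam τ T T k (headMF hd) := by
    intro hd b hr k hk hb
    have h0 := hTmod _ ⟨_, hr, rfl⟩
    simp only [PlainRule.mf, MSat] at h0
    exact (h0 k (Nat.zero_le k) hk (full_mem _)).1 hb
  have hruleN : ∀ I a b, PlainRule.nxt I a b ∈ P → ∀ k, k < lam →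
      MSat lam τ T T k (bodyMF b) →
      k + 1 < lam ∧ a ∈ T (k + 1) ∧ I.mem (τ (k + 1) - τ k) := by
    intro I a b hr k hk hb
    have h0 := hTmod _ ⟨_, hr, rfl⟩
    simp only [PlainRule.mf, MSat] at h0
    exact (h0 k (Nat.zero_le k) hk (full_mem _)).1 hb
  have hmodel : CModels CAt.den (thetaC lam τ T) (thetaC lam τ T)
      (cPiTheory lam P ∪ deltaC α lam ∪ psiC lam P) := by
    rintro φ ((hφ | hφ) | hφ)
    · obtain ⟨r, hr, k, hk, rfl⟩ := hφ
      cases r with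
      | basic hd b =>
        have key : CSat CAt.den (thetaC lam τ T) (thetaC lam τ T) (csigBody lam k b) →
            CSat CAt.den (thetaC lam τ T) (thetaC lam τ T) (csigHead k hd) := by
          intro hb
          exact (csat_head lam τ T T hk hd).mpr
            (hruleB hd b hr k hk ((csat_body lam τ T T hk b).mp hb))
        exact ⟨key, key⟩
      | nxt I a b =>
        have key : CSat CAt.den (thetaC lam τ T) (thetaC lam τ T) (csigBody lam k b) →
            CSat CAt.den (thetaC lam τ T) (thetaC lam τ T)
              (if k = lam - 1 then .fls else .atom (.bool a (k + 1))) := by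
          intro hb
          obtain ⟨h1, h2, h3⟩ := hruleN I a b hr k hk ((csat_body lam τ T T hk b).mp hb)
          rw [if_neg (by omega : ¬ k = lam - 1)]
          exact (csat_atom lam τ T T h1 a).mpr h2
        exact ⟨key, key⟩
    · rw [deltaC, Set.mem_insert_iff] at hφ
      rcases hφ with rfl | ⟨k, hk1, rfl⟩
      · show CAt.den (.eqN 0 0) (thetaC lam τ T)
        show thetaC lam τ T (.tv 0) = some (.num 0)
        rw [thetaC_tv lam τ T (by omega : (0:ℕ) < lam), hτ.1]
      · show CSat CAt.den (thetaC lam τ T) (thetaC lam τ T)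
          (.atom (.diff k (k + 1) (-1)))
        have hlt := hτ.2 k hk1
        exact ⟨τ k, τ (k + 1), thetaC_tv lam τ T (by omega), thetaC_tv lam τ T hk1,
          by omega⟩
    · rcases hφ with ⟨I, a, b, hr, k, hk1, rfl⟩ | ⟨I, a, b, nn, hr, hIn, k, hk1, rfl⟩
      · have key : CSat CAt.den (thetaC lam τ T) (thetaC lam τ T)
            (.and (csigBody lam k b)
              (PF.neg (.atom (.diff k (k + 1) (-(I.m : ℤ)))))) → False := by
          rintro ⟨hb, hneg⟩
          obtain ⟨h1, h2, h3⟩ := hruleN I a b hr k (by omega)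
            ((csat_body lam τ T T (by omega) b).mp hb)
          have hlt := hτ.2 k hk1
          have hm := h3.1
          exact hneg.1 ⟨τ k, τ (k + 1), thetaC_tv lam τ T (by omega),
            thetaC_tv lam τ T hk1, by omega⟩
        exact ⟨key, key⟩
      · have key : CSat CAt.den (thetaC lam τ T) (thetaC lam τ T)
            (.and (csigBody lam k b)
              (PF.neg (.atom (.diff (k + 1) k ((nn : ℤ) - 1))))) → False := by
          rintro ⟨hb, hneg⟩
          obtain ⟨h1, h2, h3⟩ := hruleN I a b hr k (by omega)
            ((csat_body lam τ T T (by omega) b).mp hb)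
          have hlt := hτ.2 k hk1
          have hm := h3.2 nn (Option.mem_def.mpr hIn)
          exact hneg.1 ⟨τ (k + 1), τ k, thetaC_tv lam τ T hk1,
            thetaC_tv lam τ T (by omega), by omega⟩
        exact ⟨key, key⟩
  refine ⟨hmodel, ?_⟩
  intro h hle hne hC
  -- step A: h agrees with t on all timing variables
  have htv : ∀ k, k < lam → h (.tv k) = some (.num (τ k)) := by
    intro k hk
    match k with
    | 0 =>
      have h1 := hC _ (Or.inl (Or.inr (Set.mem_insert _ _)))
      have h2 : h (.tv 0) = some (.num 0) := h1
      rw [h2, hτ.1]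
    | (j + 1) =>
      have h1 := hC _ (Or.inl (Or.inr (Set.mem_insert_iff.mpr (Or.inr ⟨j, hk, rfl⟩))))
      obtain ⟨x, y, hx, hy, _⟩ := h1
      have h2 := hle _ _ hy
      rw [thetaC_tv lam τ T hk] at h2
      simp only [Option.some.injEq, DVal.num.injEq] at h2
      rw [hy, h2]
  -- step B: h is thetaC of a trace H
  set H : ℕ → Set α := fun k => {a | h (.av a k) = some .tt} with hHdef
  have hheq : h = thetaC lam τ H := by
    funext x
    cases x with
    | av a k =>
      simp only [thetaC]
      split_ifs with hc
      · exact hc.2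
      · cases hval : h (.av a k) with
        | none => rfl
        | some d =>
          have h2 := hle _ _ hval
          simp only [thetaC] at h2
          split_ifs at h2 with h3
          · injection h2 with h4
            subst h4
            exact absurd ⟨h3.1, hval⟩ hc
    | tv k =>
      by_cases hk : k < lam
      · rw [htv k hk, thetaC_tv lam τ H hk]
      · simp only [thetaC, if_neg hk]
        cases hval : h (.tv k) with
        | none => rfl
        | some d =>
          have h2 := hle _ _ hval
          simp only [thetaC, if_neg hk] at h2
          cases h2
  have hHT : ∀ i, H i ⊆ T i := by
    intro i a ha
    have h2 := hle _ _ ha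
    exact ((thetaC_av lam τ T a i).mp h2).2
  -- step D: H differs from T somewhere below lam
  have hdiff : ∃ i, i < lam ∧ H i ≠ T i := by
    obtain ⟨x, hx⟩ := Function.ne_iff.mp hne
    cases x with
    | tv k =>
      exfalso
      apply hx
      rw [hheq]
      simp only [thetaC]
    | av a k =>
      by_cases hk : k < lam
      · refine ⟨k, hk, fun hEq => hx ?_⟩
        rw [hheq]
        simp only [thetaC, hEq]
      · exfalso
        apply hx
        rw [hheq]
        simp only [thetaC]
        rw [if_neg (fun hc => hk hc.1), if_neg (fun hc => hk hc.1)]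
  -- step E: use minimality
  have hnot := hmin H (fun i _ => hHT i) hdiff
  simp only [MHTModels] at hnot
  push_neg at hnot
  obtain ⟨φ, hφP, hφn⟩ := hnot
  obtain ⟨r, hr, rfl⟩ := hφP
  cases r with
  | basic hd b =>
    have hex : ∃ k, k < lam ∧ MSat lam τ H T k (bodyMF b) ∧
        ¬ MSat lam τ H T k (headMF hd) := by
      by_contra hcon
      push_neg at hcon
      apply hφn
      simp only [PlainRule.mf, MSat]
      intro i _ hi _
      exact ⟨fun hb => hcon i hi hb, fun hb => hruleB hd b hr i hi hb⟩
    obtain ⟨k, hk, hbH, hhH⟩ := hex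
    have hcs := hC _ (Or.inl (Or.inl ⟨_, hr, k, hk, rfl⟩))
    rw [hheq] at hcs
    simp only [csigRule, CSat] at hcs
    exact hhH ((csat_head lam τ H T hk hd).mp
      (hcs.1 ((csat_body lam τ H T hk b).mpr hbH)))
  | nxt I a b =>
    have hex : ∃ k, k < lam ∧ MSat lam τ H T k (bodyMF b) ∧
        ¬ MSat lam τ H T k (.next I (.atom a)) := by
      by_contra hcon
      push_neg at hcon
      apply hφn
      simp only [PlainRule.mf, MSat]
      intro i _ hi _
      refine ⟨fun hb => ?_, fun hb => ?_⟩
      · have h2 := hcon i hi hb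
        simp only [MSat] at h2
        exact h2
      · obtain ⟨h1, h2, h3⟩ := hruleN I a b hr i hi hb
        exact ⟨h1, h2, h3⟩
    obtain ⟨k, hk, hbH, hnH⟩ := hex
    have hbT : MSat lam τ T T k (bodyMF b) := by
      have hcb := (csat_body lam τ H T hk b).mpr hbH
      have hper := csat_persist (theta_le lam τ hHT) _ hcb
      exact (csat_body lam τ T T hk b).mp hper
    obtain ⟨h1, h2, h3⟩ := hruleN I a b hr k hk hbT
    have haH : a ∉ H (k + 1) := by
      intro ha
      exact hnH (by simp only [MSat]; exact ⟨h1, ha, h3⟩)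
    have hcs := hC _ (Or.inl (Or.inl ⟨_, hr, k, hk, rfl⟩))
    rw [hheq] at hcs
    simp only [csigRule, CSat] at hcs
    have hat := hcs.1 ((csat_body lam τ H T hk b).mpr hbH)
    rw [if_neg (by omega : ¬ k = lam - 1)] at hat
    exact haH ((csat_atom lam τ H T h1 a).mp hat)

end MetricASP
end

section
/- Let P be a plain metric logic program over alphabet 𝒜 and λ ∈ ℕ. If ⟨t,t⟩ is a constraint equilibrium model of Π_λ(P) ∪ Δ^c_λ ∪ Ψ^c_λ(P), then ⟨t,t⟩ is timed wrt λ and σ^c(⟨t,t⟩) is a metric equilibrium model of P. -/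
namespace MetricASP

section Aux
variable {α : Type}

lemma csat_top {χ κ : Type} (den : κ → Valu χ → Prop) (h t : Valu χ) :
    CSat den h t PF.top := by
  simp [PF.top, PF.neg, CSat]

lemma msat_top {lam : ℕ} {τ : ℕ → ℕ} {H T : ℕ → Set α} {k : ℕ} :
    MSat lam τ H T k MF.top := by
  simp [MF.top, MF.neg, MSat]

lemma msat_fin {lam : ℕ} {τ : ℕ → ℕ} {H T : ℕ → Set α} {k : ℕ} :
    MSat lam τ H T k MF.fin ↔ ¬ (k + 1 < lam) := by
  simp [MF.fin, MF.top, MF.neg, MSat, fullInterval, Interval.mem]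

lemma msat_always_full {lam : ℕ} {τ : ℕ → ℕ} {H T : ℕ → Set α} (φ : MF α) :
    MSat lam τ H T 0 (.always fullInterval φ) ↔ ∀ i, i < lam → MSat lam τ H T i φ := by
  simp [MSat, fullInterval, Interval.mem]

/-- `h` represents trace `H` together with timing `τ` up to `lam`. -/
def Good (lam : ℕ) (τ : ℕ → ℕ) (h : Valu (CV α)) (H : ℕ → Set α) : Prop :=
  (∀ a k, k < lam → (h (CV.av a k) = some DVal.tt ↔ a ∈ H k)) ∧
  (∀ k, k < lam → h (CV.tv k) = some (DVal.num (τ k)))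

lemma den_diff {lam : ℕ} {τ : ℕ → ℕ} {h : Valu (CV α)} {H : ℕ → Set α}
    (gh : Good lam τ h H) {i j : ℕ} (hi : i < lam) (hj : j < lam) (d : ℤ) :
    CAt.den (.diff i j d) h ↔ (τ i : ℤ) - (τ j : ℤ) ≤ d := by
  constructor
  · rintro ⟨x, y, hx, hy, hxy⟩
    rw [gh.2 i hi] at hx
    rw [gh.2 j hj] at hy
    simp only [Option.some.injEq, DVal.num.injEq] at hx hy
    omega
  · intro hd
    exact ⟨τ i, τ j, gh.2 i hi, gh.2 j hj, hd⟩

lemma batCorr {lam : ℕ} {τ : ℕ → ℕ} {h t : Valu (CV α)} {H T : ℕ → Set α}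
    (gh : Good lam τ h H) {k : ℕ} (hk : k < lam) (b : BAt α) :
    CSat CAt.den h t (csigBAt lam k b) ↔ MSat lam τ H T k b.mf := by
  cases b with
  | atm a => simpa [CSat, csigBAt, BAt.mf, MSat, CAt.den] using gh.1 a k hk
  | init =>
      by_cases h0 : k = 0
      · simp only [csigBAt, if_pos h0, BAt.mf]
        exact iff_of_true (csat_top _ _ _) (by simp [MSat, h0])
      · simp only [csigBAt, if_neg h0, BAt.mf]
        exact iff_of_false (by simp [CSat]) (by simp [MSat, h0])
  | fin =>
      by_cases hf : k = lam - 1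
      · simp only [csigBAt, if_pos hf, BAt.mf]
        rw [msat_fin]
        exact iff_of_true (csat_top _ _ _) (by omega)
      · simp only [csigBAt, if_neg hf, BAt.mf]
        rw [msat_fin]
        exact iff_of_false (by simp [CSat]) (by omega)

lemma litBodyCorr {lam : ℕ} {τ : ℕ → ℕ} {h t : Valu (CV α)} {H T : ℕ → Set α}
    (gh : Good lam τ h H) (gt : Good lam τ t T) {k : ℕ} (hk : k < lam)
    (l : Lit (BAt α)) :
    CSat CAt.den h t (csigLit (csigBAt lam k) l) ↔ MSat lam τ H T k (litMF BAt.mf l) := by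
  cases l with
  | pos b => exact batCorr gh hk b
  | neg b =>
      simp only [csigLit, litMF, PF.neg, MF.neg, CSat, MSat]
      rw [batCorr (t := t) (T := T) gh hk b, batCorr (t := t) (T := T) gt hk b]

lemma bodyCorr {lam : ℕ} {τ : ℕ → ℕ} {h t : Valu (CV α)} {H T : ℕ → Set α}
    (gh : Good lam τ h H) (gt : Good lam τ t T) {k : ℕ} (hk : k < lam)
    (b : List (Lit (BAt α))) :
    CSat CAt.den h t (csigBody lam k b) ↔ MSat lam τ H T k (bodyMF b) := by
  induction b with
  | nil => exact iff_of_true (csat_top _ _ _) msat_top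
  | cons l rest ih =>
      simp only [csigBody, bodyMF, List.map_cons, List.foldr_cons, CSat, MSat] at *
      exact and_congr (litBodyCorr gh gt hk l) ih

lemma litHeadCorr {lam : ℕ} {τ : ℕ → ℕ} {h t : Valu (CV α)} {H T : ℕ → Set α}
    (gh : Good lam τ h H) (gt : Good lam τ t T) {k : ℕ} (hk : k < lam)
    (l : Lit α) :
    CSat CAt.den h t (csigLit (fun a => PF.atom (CAt.bool a k)) l) ↔
      MSat lam τ H T k (litMF MF.atom l) := by
  cases l with
  | pos a => simpa [CSat, csigLit, litMF, MSat, CAt.den] using gh.1 a k hk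
  | neg a =>
      simp only [csigLit, litMF, PF.neg, MF.neg, CSat, MSat, CAt.den]
      rw [gh.1 a k hk, gt.1 a k hk]

lemma headCorr {lam : ℕ} {τ : ℕ → ℕ} {h t : Valu (CV α)} {H T : ℕ → Set α}
    (gh : Good lam τ h H) (gt : Good lam τ t T) {k : ℕ} (hk : k < lam)
    (hd : List (Lit α)) :
    CSat CAt.den h t (csigHead k hd) ↔ MSat lam τ H T k (headMF hd) := by
  induction hd with
  | nil => exact iff_of_false (by simp [csigHead, CSat]) (by simp [headMF, MSat])
  | cons l rest ih =>
      simp only [csigHead, headMF, List.map_cons, List.foldr_cons, CSat, MSat] at *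
      exact or_congr (litHeadCorr gh gt hk l) ih

lemma ruleCorrBasic {lam : ℕ} {τ : ℕ → ℕ} {h t : Valu (CV α)} {H T : ℕ → Set α}
    (gh : Good lam τ h H) (gt : Good lam τ t T) {k : ℕ} (hk : k < lam)
    (hd : List (Lit α)) (b : List (Lit (BAt α))) :
    CSat CAt.den h t (csigRule lam k (.basic hd b)) ↔
      MSat lam τ H T k (.impl (bodyMF b) (headMF hd)) := by
  simp only [csigRule, CSat, MSat]
  rw [bodyCorr gh gt hk b, bodyCorr gt gt hk b, headCorr gh gt hk hd,
    headCorr gt gt hk hd]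

set_option maxHeartbeats 1000000 in
lemma nxtCorr {lam : ℕ} {τ : ℕ → ℕ} {h t : Valu (CV α)} {H T : ℕ → Set α}
    (gh : Good lam τ h H) (gt : Good lam τ t T) (hτ : IsTiming lam τ)
    {k : ℕ} (hk : k < lam) (I : Interval) (a : α) (b : List (Lit (BAt α))) :
    (CSat CAt.den h t (csigRule lam k (.nxt I a b)) ∧
      (k + 1 < lam → CSat CAt.den h t
        (PF.imp (.and (csigBody lam k b)
          (PF.neg (.atom (.diff k (k + 1) (-(I.m : ℤ)))))) .fls)) ∧
      (∀ nn ∈ I.n, k + 1 < lam → CSat CAt.den h t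
        (PF.imp (.and (csigBody lam k b)
          (PF.neg (.atom (.diff (k + 1) k ((nn : ℤ) - 1))))) .fls)))
    ↔ MSat lam τ H T k (MF.impl (bodyMF b) (.next I (.atom a))) := by
  have eBh := bodyCorr gh gt hk b
  have eBt := bodyCorr gt gt hk b
  by_cases hk1 : k + 1 < lam
  · have hne : ¬ (k = lam - 1) := by omega
    have hstep : τ k < τ (k + 1) := hτ.2 k hk1
    have em_h : CAt.den (.diff k (k + 1) (-(I.m : ℤ))) h ↔ I.m ≤ τ (k + 1) - τ k := by
      rw [den_diff gh hk hk1]; omega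
    have em_t : CAt.den (.diff k (k + 1) (-(I.m : ℤ))) t ↔ I.m ≤ τ (k + 1) - τ k := by
      rw [den_diff gt hk hk1]; omega
    have ea_h : CAt.den (CAt.bool a (k + 1)) h ↔ a ∈ H (k + 1) := by
      simp only [CAt.den]; exact gh.1 a (k + 1) hk1
    have ea_t : CAt.den (CAt.bool a (k + 1)) t ↔ a ∈ T (k + 1) := by
      simp only [CAt.den]; exact gt.1 a (k + 1) hk1
    rcases hn : I.n with _ | nn
    · simp only [csigRule, if_neg hne, PF.neg, CSat, MSat, Interval.mem, hn,
        Option.not_mem_none, hk1, true_and, implies_true, and_true,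
        IsEmpty.forall_iff, forall_const]
      rw [eBh, eBt, em_h, em_t, ea_h, ea_t]
      generalize MSat lam τ H T k (bodyMF b) = Bh
      generalize MSat lam τ T T k (bodyMF b) = Bt
      clear eBh eBt gh gt hτ em_h em_t ea_h ea_t hn hne hstep
      tauto
    · have en_h : CAt.den (.diff (k + 1) k ((nn : ℤ) - 1)) h ↔ τ (k + 1) - τ k < nn := by
        rw [den_diff gh hk1 hk]; omega
      have en_t : CAt.den (.diff (k + 1) k ((nn : ℤ) - 1)) t ↔ τ (k + 1) - τ k < nn := by
        rw [den_diff gt hk1 hk]; omega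
      simp only [csigRule, if_neg hne, PF.neg, CSat, MSat, Interval.mem, hn,
        Option.mem_some_iff, hk1, true_and, forall_eq', forall_const]
      rw [eBh, eBt, em_h, em_t, en_h, en_t, ea_h, ea_t]
      generalize MSat lam τ H T k (bodyMF b) = Bh
      generalize MSat lam τ T T k (bodyMF b) = Bt
      clear eBh eBt gh gt hτ em_h em_t ea_h ea_t en_h en_t hn hne hstep
      tauto
  · have heq : k = lam - 1 := by omega
    simp only [csigRule, if_pos heq, CSat, MSat, hk1, false_and, IsEmpty.forall_iff,
      forall_const, implies_true, and_true, true_and]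
    rw [eBh, eBt]

/-- Extract the timing function from the valuation `t`. -/
noncomputable def tauOf {α : Type} (t : Valu (CV α)) : ℕ → ℕ := fun k =>
  match t (CV.tv k) with
  | some (DVal.num n) => n
  | _ => 0

lemma tauOf_eq {α : Type} {t : Valu (CV α)} {k n : ℕ}
    (h : t (CV.tv k) = some (DVal.num n)) : tauOf t k = n := by
  simp [tauOf, h]

end Aux


theorem stmt3 {α : Type} (lam : ℕ) (t : Valu (CV α)) (P : Set (PlainRule α))
    (hEq : CEqModel CAt.den t (cPiTheory lam P ∪ deltaC α lam ∪ psiC lam P)) :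
    ∃ τ : ℕ → ℕ, IsTiming lam τ ∧
      (∀ k, k < lam → t (CV.tv k) = some (DVal.num (τ k))) ∧
      MetricEqModel lam τ (fun k => {a | t (CV.av a k) = some DVal.tt})
        (PlainRule.mf '' P) := by
  obtain ⟨hTot, hMin⟩ := hEq
  have h0 : t (CV.tv 0) = some (DVal.num 0) := by
    have := hTot (PF.atom (CAt.eqN 0 0))
      (Set.mem_union_left _ (Set.mem_union_right _ (Set.mem_insert _ _)))
    simpa [CSat, CAt.den] using this
  have hdiff : ∀ k, k + 1 < lam → ∃ x y : ℕ,
      t (CV.tv k) = some (DVal.num x) ∧ t (CV.tv (k + 1)) = some (DVal.num y) ∧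
      (x : ℤ) - y ≤ -1 := by
    intro k hk
    have := hTot (PF.atom (CAt.diff k (k + 1) (-1)))
      (Set.mem_union_left _ (Set.mem_union_right _
        (Set.mem_insert_iff.mpr (Or.inr ⟨k, hk, rfl⟩))))
    simpa [CSat, CAt.den] using this
  have htv : ∀ k, k < lam → t (CV.tv k) = some (DVal.num (tauOf t k)) := by
    intro k hk
    match k with
    | 0 => rw [tauOf_eq h0]; exact h0
    | j + 1 =>
        obtain ⟨x, y, hx, hy, _⟩ := hdiff j (by omega)
        rw [tauOf_eq hy]; exact hy
  have hτ : IsTiming lam (tauOf t) := by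
    refine ⟨tauOf_eq h0, ?_⟩
    intro k hk
    obtain ⟨x, y, hx, hy, hxy⟩ := hdiff k hk
    rw [tauOf_eq hx, tauOf_eq hy]; omega
  set τ := tauOf t with hτdef
  set T : ℕ → Set α := fun k => {a | t (CV.av a k) = some DVal.tt} with hT
  have gT : Good lam τ t T := ⟨fun a k _ => Iff.rfl, htv⟩
  refine ⟨τ, hτ, htv, ?_, ?_⟩
  · rintro φ ⟨r, hr, rfl⟩
    cases r with
    | basic hd b =>
        simp only [PlainRule.mf, msat_always_full]
        intro i hi
        exact (ruleCorrBasic gT gT hi hd b).mp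
          (hTot _ (Set.mem_union_left _ (Set.mem_union_left _ ⟨_, hr, i, hi, rfl⟩)))
    | nxt I a b =>
        simp only [PlainRule.mf, msat_always_full]
        intro i hi
        refine (nxtCorr gT gT hτ hi I a b).mp ⟨?_, ?_, ?_⟩
        · exact hTot _ (Set.mem_union_left _ (Set.mem_union_left _ ⟨_, hr, i, hi, rfl⟩))
        · intro hi1
          exact hTot _ (Set.mem_union_right _ (Or.inl ⟨I, a, b, hr, i, hi1, rfl⟩))
        · intro nn hnn hi1
          exact hTot _ (Set.mem_union_right _ (Or.inr ⟨I, a, b, nn, hr, hnn, i, hi1, rfl⟩))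
  · intro H htr hex hM
    obtain ⟨i0, hi0, hne0⟩ := hex
    have hlam : 0 < lam := by omega
    have gH : Good lam τ (thetaC lam τ H) H := by
      constructor
      · intro a k hk
        by_cases ha : a ∈ H k <;> simp [thetaC, hk, ha]
      · intro k hk; simp [thetaC, hk]
    have hle : Valu.le (thetaC lam τ H) t := by
      intro x d hx
      cases x with
      | av a k =>
          by_cases hc : k < lam ∧ a ∈ H k
          · simp only [thetaC, if_pos hc, Option.some.injEq] at hx
            subst hx
            exact htr k hc.1 hc.2
          · simp only [thetaC, if_neg hc] at hx
            exact absurd hx (by simp)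
      | tv k =>
          by_cases hc : k < lam
          · simp only [thetaC, if_pos hc, Option.some.injEq] at hx
            subst hx
            exact htv k hc
          · simp only [thetaC, if_neg hc] at hx
            exact absurd hx (by simp)
    have hneq : thetaC lam τ H ≠ t := by
      intro hcontra
      obtain ⟨a, haT, haH⟩ : ∃ a, a ∈ T i0 ∧ a ∉ H i0 := by
        by_contra hno
        push_neg at hno
        exact hne0 (Set.Subset.antisymm (htr i0 hi0) hno)
      have h1 : thetaC lam τ H (CV.av a i0) = none := by simp [thetaC, haH]
      rw [hcontra] at h1
      have haT' : t (CV.av a i0) = some DVal.tt := haT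
      rw [h1] at haT'
      exact Option.some_ne_none _ haT'.symm
    apply hMin _ hle hneq
    rintro φ ((hφ | hφ) | (hφ | hφ))
    · obtain ⟨r, hr, k, hk, rfl⟩ := hφ
      have hMr := hM r.mf ⟨r, hr, rfl⟩
      cases r with
      | basic hd b =>
          simp only [PlainRule.mf, msat_always_full] at hMr
          exact (ruleCorrBasic gH gT hk hd b).mpr (hMr k hk)
      | nxt I a b =>
          simp only [PlainRule.mf, msat_always_full] at hMr
          exact ((nxtCorr gH gT hτ hk I a b).mpr (hMr k hk)).1
    · rcases hφ with rfl | ⟨k, hk, rfl⟩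
      · simp [CSat, CAt.den, thetaC, hlam, hτ.1]
      · refine ⟨τ k, τ (k + 1), gH.2 k (by omega), gH.2 (k + 1) hk, ?_⟩
        have := hτ.2 k hk
        omega
    · obtain ⟨I, a, b, hrP, k, hk1, rfl⟩ := hφ
      have hMr := hM _ ⟨_, hrP, rfl⟩
      simp only [PlainRule.mf, msat_always_full] at hMr
      exact ((nxtCorr gH gT hτ (show k < lam by omega) I a b).mpr
        (hMr k (by omega))).2.1 hk1
    · obtain ⟨I, a, b, nn, hrP, hn, k, hk1, rfl⟩ := hφ
      have hMr := hM _ ⟨_, hrP, rfl⟩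
      simp only [PlainRule.mf, msat_always_full] at hMr
      exact ((nxtCorr gH gT hτ (show k < lam by omega) I a b).mpr
        (hMr k (by omega))).2.2 nn hn hk1


end MetricASP
end
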